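/- Let f(x) = (1/2)xᵀAx − bᵀx with A symmetric positive semidefinite and ‖A‖ the spectral norm, τ ≥ 0, t ∈ (0, 2/‖A‖), and F(x) = f(x) + τ‖x‖₁. Given y ∈ ℝⁿ, let H = {x : xᵢ = 0 whenever yᵢ = 0} and let x⁺ = argmin{ (1/2)‖x − (y − t(Ay − b))‖² + tτ‖x‖₁ : x ∈ H }. Then F(y) ≥ F(x⁺) + (1/2)(2/t − ‖A‖)‖x⁺ − y‖²; in particular F(x⁺) ≤ F(y). -/

import Mathlib

open Matrix

/-- `f(x) = (1/2) xᵀAx − bᵀx`. -/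
noncomputable def quadObj {n : ℕ} (A : Matrix (Fin n) (Fin n) ℝ) (b : Fin n → ℝ)
    (x : Fin n → ℝ) : ℝ :=
  (1 / 2) * (x ⬝ᵥ A.mulVec x) - b ⬝ᵥ x

/-- `F(x) = (1/2) xᵀAx − bᵀx + τ‖x‖₁`. -/
noncomputable def l1QuadObj {n : ℕ} (A : Matrix (Fin n) (Fin n) ℝ) (b : Fin n → ℝ)
    (τ : ℝ) (x : Fin n → ℝ) : ℝ :=
  quadObj A b x + τ * ∑ i, |x i|

theorem stmt17 {n : ℕ} (A : Matrix (Fin n) (Fin n) ℝ) (b : Fin n → ℝ) (τ : ℝ)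
    (hA : A.PosSemidef) (hτ : 0 ≤ τ)
    (t : ℝ) (ht0 : 0 < t) (ht2 : t < 2 / ‖Matrix.toEuclideanCLM (𝕜 := ℝ) A‖)
    (y xp : Fin n → ℝ)
    (hfeas : ∀ i, y i = 0 → xp i = 0)
    (hopt : ∀ z : Fin n → ℝ, (∀ i, y i = 0 → z i = 0) →
      (1 / 2) * ((xp - (y - t • (A.mulVec y - b))) ⬝ᵥ (xp - (y - t • (A.mulVec y - b)))) +
          t * τ * ∑ i, |xp i| ≤
        (1 / 2) * ((z - (y - t • (A.mulVec y - b))) ⬝ᵥ (z - (y - t • (A.mulVec y - b)))) +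
          t * τ * ∑ i, |z i|) :
    l1QuadObj A b τ y ≥ l1QuadObj A b τ xp +
      (1 / 2) * (2 / t - ‖Matrix.toEuclideanCLM (𝕜 := ℝ) A‖) * ((xp - y) ⬝ᵥ (xp - y)) ∧
    l1QuadObj A b τ xp ≤ l1QuadObj A b τ y := by
  set nA : ℝ := ‖Matrix.toEuclideanCLM (𝕜 := ℝ) A‖ with hnA
  set g : Fin n → ℝ := A.mulVec y - b with hg
  set c : Fin n → ℝ := y - t • g with hc
  set D : ℝ := (xp - y) ⬝ᵥ (xp - y) with hD
  set d : Fin n → ℝ := xp - y with hd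
  set Sx : ℝ := ∑ i, |xp i| with hSx
  set Sy : ℝ := ∑ i, |y i| with hSy
  set P : ℝ := (1 / 2) * ((y - c) ⬝ᵥ (y - c)) + t * τ * Sy with hP
  set Q : ℝ := (1 / 2) * ((xp - c) ⬝ᵥ (xp - c)) + t * τ * Sx with hQ
  clear_value nA g c D d Sx Sy P Q
  have hci : ∀ i, c i = y i - t * g i := by
    intro i; rw [hc]; simp
  have hdi : ∀ i, d i = xp i - y i := by
    intro i; rw [hd]; simp
  have hD0 : 0 ≤ D := by
    rw [hD, hd]; exact Finset.sum_nonneg fun i _ => mul_self_nonneg _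
  -- Q ≤ P
  have hQP : Q ≤ P := by
    have h := hopt y (fun i h => h)
    rw [hP, hSy]; exact h
  -- strong convexity comparison for s ∈ (0,1]
  have claim1 : ∀ s : ℝ, 0 < s → s ≤ 1 →
      Q + (1/2) * s * (1 - s) * D ≤ (1 - s) * Q + s * P := by
    intro s hs0 hs1
    set z : Fin n → ℝ := xp + s • (y - xp) with hz
    have hzi : ∀ i, z i = xp i + s * (y i - xp i) := by
      intro i; rw [hz]; simp
    clear_value z
    have hzfeas : ∀ i, y i = 0 → z i = 0 := by
      intro i h
      rw [hzi i, hfeas i h, h]; ring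
    have hzq : (z - c) ⬝ᵥ (z - c) =
        (1 - s) * ((xp - c) ⬝ᵥ (xp - c)) + s * ((y - c) ⬝ᵥ (y - c)) - s * (1 - s) * D := by
      calc (z - c) ⬝ᵥ (z - c)
          = ∑ i, ((1 - s) * ((xp i - c i) * (xp i - c i)) + s * ((y i - c i) * (y i - c i))
              - s * (1 - s) * ((xp i - y i) * (xp i - y i))) := by
            simp only [dotProduct, Pi.sub_apply]
            refine Finset.sum_congr rfl fun i _ => ?_
            rw [hzi i]; ring
        _ = (1 - s) * ((xp - c) ⬝ᵥ (xp - c)) + s * ((y - c) ⬝ᵥ (y - c)) - s * (1 - s) * D := by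
            rw [hD, hd]
            simp [dotProduct, Finset.sum_add_distrib, Finset.sum_sub_distrib, Finset.mul_sum]
    have hzl1 : ∑ i, |z i| ≤ (1 - s) * Sx + s * Sy := by
      have key : ∀ i, |z i| ≤ (1 - s) * |xp i| + s * |y i| := by
        intro i
        have hzi' : z i = (1 - s) * xp i + s * y i := by rw [hzi i]; ring
        rw [hzi']
        calc |(1 - s) * xp i + s * y i| ≤ |(1 - s) * xp i| + |s * y i| := abs_add_le _ _
          _ = (1 - s) * |xp i| + s * |y i| := by
              rw [abs_mul, abs_mul, abs_of_nonneg (by linarith), abs_of_nonneg hs0.le]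
      calc ∑ i, |z i| ≤ ∑ i, ((1 - s) * |xp i| + s * |y i|) :=
            Finset.sum_le_sum fun i _ => key i
        _ = (1 - s) * Sx + s * Sy := by
            rw [hSx, hSy]
            simp [Finset.sum_add_distrib, Finset.mul_sum]
    have h1 : Q ≤ (1/2) * ((z - c) ⬝ᵥ (z - c)) + t * τ * ∑ i, |z i| := hopt z hzfeas
    have htτ : 0 ≤ t * τ := mul_nonneg ht0.le hτ
    have h2 : (1/2) * ((z - c) ⬝ᵥ (z - c)) + t * τ * ∑ i, |z i| ≤
        (1 - s) * Q + s * P - (1/2) * s * (1 - s) * D := by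
      rw [hzq, hP, hQ]
      nlinarith [hzl1]
    linarith
  -- strong-convexity conclusion
  have claim2 : Q + (1/2) * D ≤ P := by
    by_contra h
    push_neg at h
    have hDpos : 0 < D := by
      rcases eq_or_lt_of_le hD0 with h0 | h0
      · exfalso; rw [← h0] at h; linarith
      · exact h0
    set s : ℝ := (Q + (1/2) * D - P) / D with hs
    have hs0 : 0 < s := div_pos (by linarith) hDpos
    have hs1 : s ≤ 1 := by
      rw [hs, div_le_one hDpos]; linarith
    have hsD : s * D = Q + (1/2) * D - P := by
      rw [hs]; field_simp
    clear_value s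
    have hc1 := claim1 s hs0 hs1
    have hE : 0 < s * D := by rw [hsD]; linarith
    have hs2 : s * (s * D) = s * (Q + (1/2) * D - P) := by rw [hsD]
    have hs3 : 0 < s * (s * D) := mul_pos hs0 hE
    nlinarith [hc1, hs2, hs3]
  -- expand claim2 into the key gradient inequality
  have hycc : (y - c) ⬝ᵥ (y - c) = t^2 * (g ⬝ᵥ g) := by
    simp only [dotProduct, Pi.sub_apply, Finset.mul_sum]
    refine Finset.sum_congr rfl fun i _ => ?_
    rw [hci i]; ring
  have hxcc : (xp - c) ⬝ᵥ (xp - c) = D + 2 * t * (d ⬝ᵥ g) + t^2 * (g ⬝ᵥ g) := by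
    calc (xp - c) ⬝ᵥ (xp - c)
        = ∑ i, ((xp i - y i) * (xp i - y i) + 2 * t * ((xp i - y i) * g i)
            + t^2 * (g i * g i)) := by
          simp only [dotProduct, Pi.sub_apply]
          refine Finset.sum_congr rfl fun i _ => ?_
          rw [hci i]; ring
      _ = D + 2 * t * (d ⬝ᵥ g) + t^2 * (g ⬝ᵥ g) := by
          rw [hD, hd]
          simp [dotProduct, Pi.sub_apply, Finset.sum_add_distrib, Finset.mul_sum]
  have hkey : d ⬝ᵥ g + τ * (Sx - Sy) ≤ -(D / t) := by
    rw [hP, hQ, hycc, hxcc] at claim2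
    have h4 : (d ⬝ᵥ g + τ * (Sx - Sy)) * t ≤ -D := by nlinarith [claim2]
    rw [← neg_div, le_div_iff₀ ht0]
    exact h4
  -- symmetry of A
  have hsym : ∀ i j, A i j = A j i := by
    intro i j
    have := congrFun (congrFun hA.1 i) j
    simpa using this.symm
  have hsymdot : y ⬝ᵥ A.mulVec d = d ⬝ᵥ A.mulVec y := by
    simp only [dotProduct, mulVec, Finset.mul_sum]
    rw [Finset.sum_comm]
    refine Finset.sum_congr rfl fun i _ => Finset.sum_congr rfl fun j _ => ?_
    rw [hsym j i]; ring
  have hxp : xp = y + d := by rw [hd]; abel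
  have expand : xp ⬝ᵥ A.mulVec xp =
      y ⬝ᵥ A.mulVec y + 2 * (d ⬝ᵥ A.mulVec y) + d ⬝ᵥ A.mulVec d := by
    nth_rewrite 1 [hxp]
    nth_rewrite 1 [hxp]
    rw [mulVec_add, dotProduct_add, add_dotProduct, add_dotProduct, hsymdot]
    ring
  have hbx : b ⬝ᵥ xp = b ⬝ᵥ y + b ⬝ᵥ d := by
    nth_rewrite 1 [hxp]; rw [dotProduct_add]
  have hdg : d ⬝ᵥ g = d ⬝ᵥ A.mulVec y - b ⬝ᵥ d := by
    rw [hg, dotProduct_sub, dotProduct_comm d b]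
  -- expansion of the objective difference
  have hF : l1QuadObj A b τ xp = l1QuadObj A b τ y + d ⬝ᵥ g
      + (1/2) * (d ⬝ᵥ A.mulVec d) + τ * (Sx - Sy) := by
    rw [l1QuadObj, l1QuadObj, quadObj, quadObj, ← hSx, ← hSy, expand, hbx, hdg]
    ring
  -- operator norm bound
  have hAbound : d ⬝ᵥ A.mulVec d ≤ nA * D := by
    set T := Matrix.toEuclideanCLM (𝕜 := ℝ) A with hT
    set v : EuclideanSpace ℝ (Fin n) := (WithLp.equiv 2 _).symm d with hv
    have h1 : T v = (WithLp.equiv 2 _).symm (A.mulVec d) :=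
      Matrix.toEuclideanCLM_toLp A d
    have h2 : d ⬝ᵥ A.mulVec d = inner ℝ v (T v) := by
      rw [h1]; simp [dotProduct, PiLp.inner_apply, hv, WithLp.equiv_symm_apply, mul_comm]
    have h3 : D = ‖v‖ * ‖v‖ := by
      rw [← real_inner_self_eq_norm_mul_norm, hD, hd]
      simp [dotProduct, PiLp.inner_apply, hv, WithLp.equiv_symm_apply, hdi, -real_inner_self_eq_norm_sq]
      rw [EuclideanSpace.norm_sq_eq]; simp [hdi, sq]
    rw [h2, h3, hnA]
    calc inner ℝ v (T v) ≤ ‖v‖ * ‖T v‖ := real_inner_le_norm v (T v)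
      _ ≤ ‖v‖ * (‖T‖ * ‖v‖) :=
          mul_le_mul_of_nonneg_left (T.le_opNorm v) (norm_nonneg v)
      _ = ‖T‖ * (‖v‖ * ‖v‖) := by ring
  -- positivity of the coefficient
  have hnA0 : 0 < nA := by
    rcases eq_or_lt_of_le (norm_nonneg (Matrix.toEuclideanCLM (𝕜 := ℝ) A)) with h0 | h0
    · exfalso; rw [hnA, ← h0] at ht2; simp at ht2; linarith
    · rw [hnA]; exact h0
  have hcoef : 0 < 2 / t - nA := by
    have h1 : t * nA < 2 := by
      rw [lt_div_iff₀ hnA0] at ht2; linarith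
    have h2 : nA < 2 / t := by rw [lt_div_iff₀ ht0]; linarith [mul_comm t nA]
    linarith
  have htne : t ≠ 0 := ht0.ne'
  have heq : (1/2) * (2/t - nA) * D = D / t - (1/2) * nA * D := by
    field_simp
  have hmain : l1QuadObj A b τ y ≥ l1QuadObj A b τ xp + (1/2) * (2/t - nA) * D := by
    rw [heq, hF]
    linarith [hkey, hAbound]
  refine ⟨hmain, ?_⟩
  have hterm : 0 ≤ (1/2) * (2/t - nA) * D :=
    mul_nonneg (mul_nonneg (by norm_num) hcoef.le) hD0
  linarith [hmain, hterm]
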